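/- Let n = 2k with k ≥ 6, let s be an integer with 2 ≤ s ≤ k−3, and let S1 = {1,…,s, n−s,…,n−1} and S2 = {k−s,…,k−1, k+1,…,k+s}. For 0 ≤ i ≤ ⌊(k−1)/2⌋ let λ_{2i+1} = 2·Σ_{h=1}^{s} cos((2i+1)hπ/k) and β_{2i+1} = (−1)·λ_{2i+1} denote the odd-indexed eigenvalues of G(ℤ_n, S1) and G(ℤ_n, S2) respectively. If the sets {λ_1, λ_3, …, λ_{2⌊(k−1)/2⌋+1}} and {β_1, β_3, …, β_{2⌊(k−1)/2⌋+1}} are distinct, then G(ℤ_n, S1) and G(ℤ_n, S2) are not cospectral: the multisets of eigenvalues (with multiplicity) of their adjacency matrices differ. -/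

import Mathlib

open Polynomial Real

/-- Adjacency matrix (over ℝ) of the circulant graph `G(ℤ_n, S)`. -/
noncomputable def circAdj (n : ℕ) (S : Finset (ZMod n)) : Matrix (ZMod n) (ZMod n) ℝ :=
  fun i j => if j - i ∈ S then 1 else 0

/-- Multiset of eigenvalues (with multiplicity) of the circulant graph `G(ℤ_n, S)`. -/
noncomputable def circSpectrum (n : ℕ) [NeZero n] (S : Finset (ZMod n)) : Multiset ℝ :=
  (Matrix.charpoly (circAdj n S)).roots

namespace CircAux

open Matrix Finset

lemma charpoly_diag {m : Type} [Fintype m] [DecidableEq m] (d : m → ℂ) :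
    (Matrix.diagonal d).charpoly = ∏ i, (X - C (d i)) := by
  rw [Matrix.charpoly]
  have : charmatrix (Matrix.diagonal d) = Matrix.diagonal fun i => X - C (d i) := by
    apply Matrix.ext; intro i j
    by_cases h : i = j
    · subst h
      rw [charmatrix_apply_eq, Matrix.diagonal_apply_eq d i,
        Matrix.diagonal_apply_eq (fun i => (X:ℂ[X]) - C (d i)) i]
    · rw [charmatrix_apply_ne _ _ _ h, Matrix.diagonal_apply_ne _ h,
        Matrix.diagonal_apply_ne _ h, map_zero, neg_zero]
  rw [this, Matrix.det_diagonal]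

lemma charpoly_conj {m : Type} [Fintype m] [DecidableEq m] (A D U V : Matrix m m ℂ)
    (hUV : U * V = 1) (hAU : A * U = U * D) : A.charpoly = D.charpoly := by
  have hA : A = U * D * V := by
    calc A = A * (U * V) := by rw [hUV, mul_one]
    _ = (A * U) * V := by rw [mul_assoc]
    _ = U * D * V := by rw [hAU]
  let mc : Matrix m m ℂ →+* Matrix m m ℂ[X] := (Polynomial.C).mapMatrix
  have h1 : mc U * mc V = 1 := by rw [← _root_.map_mul, hUV, _root_.map_one]
  have hcomm : Matrix.scalar m (X : ℂ[X]) * mc V = mc V * Matrix.scalar m (X : ℂ[X]) :=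
    (Matrix.scalar_commute (X : ℂ[X]) (fun r' => Commute.all _ _) (mc V)).eq
  have hcm : charmatrix A = mc U * charmatrix D * mc V := by
    rw [hA]
    show Matrix.scalar m (X : ℂ[X]) - mc (U * D * V) = _
    have : mc U * charmatrix D * mc V
        = mc U * mc V * Matrix.scalar m (X : ℂ[X]) - mc U * mc D * mc V := by
      rw [charmatrix]
      show mc U * (Matrix.scalar m (X : ℂ[X]) - mc D) * mc V = _
      rw [Matrix.mul_sub, Matrix.sub_mul, mul_assoc (mc U), hcomm, ← mul_assoc]
    rw [this, h1, one_mul, _root_.map_mul, _root_.map_mul]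
  rw [Matrix.charpoly, Matrix.charpoly, hcm, Matrix.det_mul, Matrix.det_mul]
  have hdet : (mc U).det * (mc V).det = 1 := by
    rw [← Matrix.det_mul, h1, Matrix.det_one]
  calc (mc U).det * (charmatrix D).det * (mc V).det
      = (charmatrix D).det * ((mc U).det * (mc V).det) := by ring
    _ = (charmatrix D).det := by rw [hdet, mul_one]

variable {n : ℕ} [NeZero n]

noncomputable def e : AddChar (ZMod n) ℂ := ZMod.stdAddChar

noncomputable def mu (S : Finset (ZMod n)) (j : ZMod n) : ℂ := ∑ v ∈ S, e (j * v)

noncomputable def U : Matrix (ZMod n) (ZMod n) ℂ := Matrix.of fun i j => e (i * j)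

noncomputable def V : Matrix (ZMod n) (ZMod n) ℂ := Matrix.of fun i j => e (-(i * j))

lemma UV_eq : (U (n := n)) * V = (n : ℂ) • 1 := by
  ext i j
  rw [Matrix.mul_apply]
  have h1 : ∀ l : ZMod n, U i l * V l j = e (l * (i - j)) := by
    intro l
    show e (i * l) * e (-(l * j)) = _
    rw [← AddChar.map_add_eq_mul]
    ring_nf
  simp_rw [h1]
  have := AddChar.sum_mulShift (i - j) (ZMod.isPrimitive_stdAddChar n)
  rw [show (e (n := n)) = ZMod.stdAddChar from rfl, this]
  rw [Matrix.smul_apply, Matrix.one_apply, ZMod.card]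
  by_cases h : i = j <;> simp [h, sub_eq_zero]

lemma AU_eq (S : Finset (ZMod n)) :
    ((circAdj n S).map (Complex.ofRealHom : ℝ →+* ℂ)) * U = U * Matrix.diagonal (mu S) := by
  ext i j
  rw [Matrix.mul_apply, Matrix.mul_diagonal]
  have h1 : ∀ l : ZMod n, ((circAdj n S).map (Complex.ofRealHom : ℝ →+* ℂ)) i l * U l j
      = if l - i ∈ S then e (l * j) else 0 := by
    intro l
    show (Complex.ofRealHom : ℝ →+* ℂ) (if l - i ∈ S then (1:ℝ) else 0) * e (l * j) = _
    rw [MonoidWithZeroHom.map_ite_one_zero, ite_mul, one_mul, zero_mul]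
  simp_rw [h1]
  rw [← Equiv.sum_comp (Equiv.addLeft i) (fun l => if l - i ∈ S then e (l * j) else 0)]
  have h2 : ∀ v : ZMod n, (if (Equiv.addLeft i) v - i ∈ S then e (((Equiv.addLeft i) v) * j) else 0)
      = if v ∈ S then e (i * j) * e (v * j) else 0 := by
    intro v
    simp only [Equiv.coe_addLeft]
    simp only [add_sub_cancel_left]
    congr 1
    rw [← AddChar.map_add_eq_mul]
    ring_nf
  simp_rw [h2]
  rw [Finset.sum_ite_mem, Finset.univ_inter, ← Finset.mul_sum]
  show _ = e (i * j) * mu S j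
  congr 1
  unfold mu
  exact Finset.sum_congr rfl fun v _ => by rw [mul_comm j v]

lemma spec_eq (S : Finset (ZMod n)) (L : ZMod n → ℝ)
    (hL : ∀ j, mu S j = ((L j : ℝ) : ℂ)) :
    circSpectrum n S = (Finset.univ.val : Multiset (ZMod n)).map L := by
  have hn0 : (n : ℂ) ≠ 0 := Nat.cast_ne_zero.mpr (NeZero.ne n)
  have hUV' : (U (n := n)) * ((n : ℂ)⁻¹ • V) = 1 := by
    rw [Matrix.mul_smul, UV_eq, smul_smul, inv_mul_cancel₀ hn0, one_smul]
  have hcc : ((circAdj n S).map (Complex.ofRealHom : ℝ →+* ℂ)).charpoly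
      = (Matrix.diagonal (mu S)).charpoly :=
    charpoly_conj _ _ U ((n : ℂ)⁻¹ • V) hUV' (AU_eq S)
  have hmapped : (circAdj n S).charpoly.map (Complex.ofRealHom : ℝ →+* ℂ)
      = (∏ j : ZMod n, (X - C (L j))).map (Complex.ofRealHom : ℝ →+* ℂ) := by
    rw [← Matrix.charpoly_map, hcc, charpoly_diag, Polynomial.map_prod]
    refine Finset.prod_congr rfl fun j _ => ?_
    rw [Polynomial.map_sub, Polynomial.map_X, Polynomial.map_C, hL j]
    rfl
  have hchar : (circAdj n S).charpoly = ∏ j : ZMod n, (X - C (L j)) :=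
    Polynomial.map_injective _ Complex.ofReal_injective hmapped
  rw [circSpectrum, hchar, Finset.prod_eq_multiset_prod]
  rw [show Multiset.map (fun j => X - C (L j)) Finset.univ.val
      = Multiset.map (fun a => X - C a) (Multiset.map L Finset.univ.val) by
    rw [Multiset.map_map]; rfl]
  exact Polynomial.roots_multiset_prod_X_sub_C _

lemma e_int (a : ℤ) : e ((a : ZMod n)) =
    Complex.exp (((2 * π * a / n : ℝ) : ℂ) * Complex.I) := by
  show ZMod.stdAddChar _ = _
  rw [ZMod.stdAddChar_coe]
  congr 1
  push_cast
  ring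

lemma pair_eq (a : ℕ) :
    e ((a : ℕ) : ZMod n) + e (((-(a : ℤ)) : ℤ) : ZMod n)
      = ((2 * Real.cos (2 * π * a / n) : ℝ) : ℂ) := by
  have h1 : e ((a : ℕ) : ZMod n) = e (((a : ℤ)) : ZMod n) := by push_cast; rfl
  rw [h1, e_int, e_int]
  have h2 : (2 * π * (((-(a:ℤ)) : ℤ) : ℝ) / n) = (-(2 * π * (a:ℝ) / n)) := by
    push_cast; ring
  rw [h2, Complex.ofReal_neg]
  push_cast
  rw [Complex.exp_mul_I, Complex.exp_mul_I]
  rw [Complex.cos_neg, Complex.sin_neg]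
  ring

end CircAux

theorem stmt14 (k s n : ℕ) [NeZero n] (hk : 6 ≤ k) (hn : n = 2 * k)
    (hs2 : 2 ≤ s) (hsk : s ≤ k - 3)
    (S1 S2 : Finset (ZMod n))
    (hS1 : S1 = ((Finset.Icc 1 s).image fun h : ℕ => (h : ZMod n)) ∪
                ((Finset.Icc (n - s) (n - 1)).image fun h : ℕ => (h : ZMod n)))
    (hS2 : S2 = ((Finset.Icc (k - s) (k - 1)).image fun h : ℕ => (h : ZMod n)) ∪
                ((Finset.Icc (k + 1) (k + s)).image fun h : ℕ => (h : ZMod n)))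
    (lam beta : ℕ → ℝ)
    (hlam : ∀ j : ℕ, lam j = 2 * ∑ h ∈ Finset.Icc (1 : ℕ) s, Real.cos ((j : ℝ) * h * π / k))
    (hbeta : ∀ j : ℕ, beta j = -lam j)
    (hdist : (Finset.range ((k - 1) / 2 + 1)).image (fun i => lam (2 * i + 1)) ≠
             (Finset.range ((k - 1) / 2 + 1)).image (fun i => beta (2 * i + 1))) :
    circSpectrum n S1 ≠ circSpectrum n S2 := by
  classical
  have hkr : (k : ℝ) ≠ 0 := Nat.cast_ne_zero.mpr (by omega)
  -- interval reindexings in ℕ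
  have hI1 : Finset.Icc (n - s) (n - 1) = (Finset.Icc 1 s).image (fun t => n - t) := by
    ext x
    simp only [Finset.mem_Icc, Finset.mem_image]
    constructor
    · intro hx; exact ⟨n - x, by omega, by omega⟩
    · rintro ⟨t, ht, rfl⟩; omega
  have hI2 : Finset.Icc (k - s) (k - 1) = (Finset.Icc 1 s).image (fun t => k - t) := by
    ext x
    simp only [Finset.mem_Icc, Finset.mem_image]
    constructor
    · intro hx; exact ⟨k - x, by omega, by omega⟩
    · rintro ⟨t, ht, rfl⟩; omega
  have hI3 : Finset.Icc (k + 1) (k + s) = (Finset.Icc 1 s).image (fun t => k + t) := by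
    ext x
    simp only [Finset.mem_Icc, Finset.mem_image]
    constructor
    · intro hx; exact ⟨x - k, by omega, by omega⟩
    · rintro ⟨t, ht, rfl⟩; omega
  -- disjointness of the two halves
  have hdisj : ∀ A B : Finset ℕ, (∀ a ∈ A, a < n) → (∀ b ∈ B, b < n) →
      (∀ a ∈ A, ∀ b ∈ B, a ≠ b) →
      Disjoint (A.image fun h : ℕ => (h : ZMod n)) (B.image fun h : ℕ => (h : ZMod n)) := by
    intro A B hA hB hAB
    rw [Finset.disjoint_left]
    rintro x hx1 hx2
    obtain ⟨a, ha, rfl⟩ := Finset.mem_image.mp hx1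
    obtain ⟨b, hb, hba⟩ := Finset.mem_image.mp hx2
    have := congrArg ZMod.val hba
    rw [ZMod.val_cast_of_lt (hB b hb), ZMod.val_cast_of_lt (hA a ha)] at this
    exact hAB a ha b hb this.symm
  have hd1 : Disjoint ((Finset.Icc 1 s).image fun h : ℕ => (h : ZMod n))
      ((Finset.Icc (n - s) (n - 1)).image fun h : ℕ => (h : ZMod n)) := by
    apply hdisj <;> intro a ha <;> rw [Finset.mem_Icc] at ha
    · omega
    · omega
    · intro b hb; rw [Finset.mem_Icc] at hb; omega
  have hd2 : Disjoint ((Finset.Icc (k - s) (k - 1)).image fun h : ℕ => (h : ZMod n))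
      ((Finset.Icc (k + 1) (k + s)).image fun h : ℕ => (h : ZMod n)) := by
    apply hdisj <;> intro a ha <;> rw [Finset.mem_Icc] at ha
    · omega
    · omega
    · intro b hb; rw [Finset.mem_Icc] at hb; omega
  -- cast identities
  have hcast1 : ∀ t ∈ Finset.Icc 1 s, ((n - t : ℕ) : ZMod n) = -((t : ℕ) : ZMod n) := by
    intro t ht; rw [Finset.mem_Icc] at ht
    have h2 : (((n - t : ℕ) : ZMod n)) + ((t : ℕ) : ZMod n) = ((n : ℕ) : ZMod n) := by
      rw [← Nat.cast_add]; congr 1; omega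
    rw [ZMod.natCast_self] at h2
    exact eq_neg_of_add_eq_zero_left h2
  have hcast2 : ∀ t ∈ Finset.Icc 1 s, ((k - t : ℕ) : ZMod n)
      = ((k : ℕ) : ZMod n) + (-((t : ℕ) : ZMod n)) := by
    intro t ht; rw [Finset.mem_Icc] at ht
    rw [Nat.cast_sub (by omega), sub_eq_add_neg]
  -- mu of S1
  have hmu1 : ∀ j : ZMod n, CircAux.mu S1 j = ∑ h ∈ Finset.Icc 1 s,
      (CircAux.e (j * ((h : ℕ) : ZMod n)) + CircAux.e (-(j * ((h : ℕ) : ZMod n)))) := by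
    intro j
    rw [hS1]
    simp only [CircAux.mu]
    rw [Finset.sum_union hd1]
    have hsum1 : ∑ v ∈ (Finset.Icc 1 s).image (fun h : ℕ => (h : ZMod n)), CircAux.e (j * v)
        = ∑ h ∈ Finset.Icc 1 s, CircAux.e (j * ((h : ℕ) : ZMod n)) := by
      apply Finset.sum_image
      intro x hx y hy hxy
      rw [Finset.mem_coe, Finset.mem_Icc] at hx hy
      have := congrArg ZMod.val hxy
      rwa [ZMod.val_cast_of_lt (by omega), ZMod.val_cast_of_lt (by omega)] at this
    have hsum2 : ∑ v ∈ (Finset.Icc (n - s) (n - 1)).image (fun h : ℕ => (h : ZMod n)),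
        CircAux.e (j * v)
        = ∑ h ∈ Finset.Icc 1 s, CircAux.e (-(j * ((h : ℕ) : ZMod n))) := by
      rw [hI1, Finset.image_image]
      rw [Finset.sum_image (by
        intro x hx y hy hxy
        rw [Finset.mem_coe, Finset.mem_Icc] at hx hy
        have := congrArg ZMod.val hxy
        simp only [Function.comp_apply] at this
        rw [ZMod.val_cast_of_lt (by omega), ZMod.val_cast_of_lt (by omega)] at this
        omega)]
      refine Finset.sum_congr rfl fun t ht => ?_
      simp only [Function.comp_apply]
      rw [hcast1 t ht, mul_neg]
    rw [hsum1, hsum2, ← Finset.sum_add_distrib]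
  -- mu of S2
  have hmu2 : ∀ j : ZMod n, CircAux.mu S2 j
      = CircAux.e (j * ((k : ℕ) : ZMod n)) * CircAux.mu S1 j := by
    intro j
    rw [hmu1 j, hS2]
    simp only [CircAux.mu]
    rw [Finset.sum_union hd2]
    have hsA : ∑ v ∈ (Finset.Icc (k - s) (k - 1)).image (fun h : ℕ => (h : ZMod n)),
        CircAux.e (j * v)
        = ∑ h ∈ Finset.Icc 1 s,
          CircAux.e (j * ((k : ℕ) : ZMod n)) * CircAux.e (-(j * ((h : ℕ) : ZMod n))) := by
      rw [hI2, Finset.image_image]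
      rw [Finset.sum_image (by
        intro x hx y hy hxy
        rw [Finset.mem_coe, Finset.mem_Icc] at hx hy
        have := congrArg ZMod.val hxy
        simp only [Function.comp_apply] at this
        rw [ZMod.val_cast_of_lt (by omega), ZMod.val_cast_of_lt (by omega)] at this
        omega)]
      refine Finset.sum_congr rfl fun t ht => ?_
      simp only [Function.comp_apply]
      rw [hcast2 t ht, ← AddChar.map_add_eq_mul]
      congr 1
      ring
    have hsB : ∑ v ∈ (Finset.Icc (k + 1) (k + s)).image (fun h : ℕ => (h : ZMod n)),
        CircAux.e (j * v)
        = ∑ h ∈ Finset.Icc 1 s,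
          CircAux.e (j * ((k : ℕ) : ZMod n)) * CircAux.e (j * ((h : ℕ) : ZMod n)) := by
      rw [hI3, Finset.image_image]
      rw [Finset.sum_image (by
        intro x hx y hy hxy
        rw [Finset.mem_coe, Finset.mem_Icc] at hx hy
        have := congrArg ZMod.val hxy
        simp only [Function.comp_apply] at this
        rw [ZMod.val_cast_of_lt (by omega), ZMod.val_cast_of_lt (by omega)] at this
        omega)]
      refine Finset.sum_congr rfl fun t ht => ?_
      simp only [Function.comp_apply]
      rw [← AddChar.map_add_eq_mul]
      congr 1
      push_cast
      ring
    rw [hsA, hsB, ← Finset.sum_add_distrib, Finset.mul_sum]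
    refine Finset.sum_congr rfl fun t ht => ?_
    ring
  -- the sign character value
  have hemk : ∀ m : ℕ, CircAux.e (((m : ℕ) : ZMod n) * ((k : ℕ) : ZMod n)) = (-1 : ℂ) ^ m := by
    intro m
    have h1 : ((m : ℕ) : ZMod n) * ((k : ℕ) : ZMod n) = (((m * k : ℕ) : ℤ) : ZMod n) := by
      push_cast; ring
    rw [h1, CircAux.e_int]
    have h2 : (2 * π * (((m * k : ℕ) : ℤ) : ℝ) / n : ℝ) = m * π := by
      rw [hn]; push_cast; field_simp
    rw [h2]
    have h3 : ((m * π : ℝ) : ℂ) * Complex.I = (m : ℂ) * (↑π * Complex.I) := by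
      push_cast; ring
    rw [h3, Complex.exp_nat_mul, Complex.exp_pi_mul_I]
  -- real value of mu S1 at natural casts
  have hL1val : ∀ m : ℕ, CircAux.mu S1 ((m : ℕ) : ZMod n) = ((lam m : ℝ) : ℂ) := by
    intro m
    rw [hmu1, hlam]
    have hterm : ∀ h ∈ Finset.Icc 1 s,
        CircAux.e (((m : ℕ) : ZMod n) * ((h : ℕ) : ZMod n))
          + CircAux.e (-(((m : ℕ) : ZMod n) * ((h : ℕ) : ZMod n)))
        = ((2 * Real.cos ((m : ℝ) * h * π / k) : ℝ) : ℂ) := by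
      intro h hh
      have h1 : ((m : ℕ) : ZMod n) * ((h : ℕ) : ZMod n) = (((m * h : ℕ)) : ZMod n) := by
        push_cast; ring
      have h2 : -(((m : ℕ) : ZMod n) * ((h : ℕ) : ZMod n))
          = (((-(m * h : ℕ) : ℤ)) : ZMod n) := by
        push_cast; ring
      rw [h2, h1, CircAux.pair_eq]
      have h3 : 2 * π * ((m * h : ℕ) : ℝ) / n = (m : ℝ) * h * π / k := by
        rw [hn]; push_cast; field_simp
      rw [h3]
    rw [Finset.sum_congr rfl hterm, Complex.ofReal_mul]
    push_cast [Finset.mul_sum]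
    rfl
  -- the real eigenvalue functions
  have hL1 : ∀ j : ZMod n, CircAux.mu S1 j = (((fun j : ZMod n => lam j.val) j : ℝ) : ℂ) := by
    intro j
    conv_lhs => rw [← ZMod.natCast_zmod_val j]
    exact hL1val j.val
  have hL2 : ∀ j : ZMod n, CircAux.mu S2 j
      = (((fun j : ZMod n => (-1 : ℝ) ^ (j.val) * lam j.val) j : ℝ) : ℂ) := by
    intro j
    rw [hmu2 j]
    conv_lhs => rw [← ZMod.natCast_zmod_val j]
    rw [hemk j.val, hL1val j.val]
    push_cast
    ring
  have hs1 := CircAux.spec_eq S1 _ hL1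
  have hs2 := CircAux.spec_eq S2 _ hL2
  intro hEq
  rw [hs1, hs2] at hEq
  set L1 : ZMod n → ℝ := fun j : ZMod n => lam j.val with hL1def
  set L2 : ZMod n → ℝ := fun j : ZMod n => (-1 : ℝ) ^ (j.val) * lam j.val with hL2def
  -- split into odd and even parts
  have hsplit : ∀ L : ZMod n → ℝ, Multiset.map L Finset.univ.val
      = Multiset.map L (Finset.filter (fun j => Odd (ZMod.val j)) Finset.univ).val
        + Multiset.map L (Finset.filter (fun j => ¬ Odd (ZMod.val j)) Finset.univ).val := by
    intro L
    rw [Finset.filter_val, Finset.filter_val, ← Multiset.map_add, Multiset.filter_add_not]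
  rw [hsplit L1, hsplit L2] at hEq
  have heven : Multiset.map L1 (Finset.filter (fun j => ¬ Odd (ZMod.val j)) Finset.univ).val
      = Multiset.map L2 (Finset.filter (fun j => ¬ Odd (ZMod.val j)) Finset.univ).val := by
    apply Multiset.map_congr rfl
    intro j hj
    rw [Finset.filter_val, Multiset.mem_filter] at hj
    have hev : Even (ZMod.val j) := Nat.not_odd_iff_even.mp hj.2
    simp only [hL1def, hL2def]
    rw [hev.neg_one_pow, one_mul]
  rw [heven] at hEq
  have hodd : Multiset.map L1 (Finset.filter (fun j => Odd (ZMod.val j)) Finset.univ).val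
      = Multiset.map L2 (Finset.filter (fun j => Odd (ZMod.val j)) Finset.univ).val :=
    add_right_cancel hEq
  -- to finset images
  have himg : (Finset.filter (fun j => Odd (ZMod.val j)) Finset.univ).image L1
      = (Finset.filter (fun j => Odd (ZMod.val j)) Finset.univ).image L2 := by
    apply Finset.val_inj.mp
    rw [Finset.image_val, Finset.image_val, hodd]
  -- odd residues are exactly casts of odd numbers below n
  have hOdd : Finset.filter (fun j => Odd (ZMod.val j)) (Finset.univ : Finset (ZMod n))
      = (Finset.range k).image (fun i => ((2 * i + 1 : ℕ) : ZMod n)) := by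
    ext j
    simp only [Finset.mem_filter, Finset.mem_univ, true_and, Finset.mem_image, Finset.mem_range]
    constructor
    · intro hj
      obtain ⟨i, hi⟩ := hj
      have hjlt := ZMod.val_lt j
      refine ⟨i, by omega, ?_⟩
      rw [show 2 * i + 1 = ZMod.val j by omega, ZMod.natCast_zmod_val]
    · rintro ⟨i, hi, rfl⟩
      rw [ZMod.val_cast_of_lt (by omega)]
      exact ⟨i, by omega⟩
  have hT1 : (Finset.filter (fun j => Odd (ZMod.val j)) (Finset.univ : Finset (ZMod n))).image L1
      = (Finset.range k).image (fun i => lam (2 * i + 1)) := by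
    rw [hOdd, Finset.image_image]
    apply Finset.image_congr
    intro i hi
    rw [Finset.mem_coe, Finset.mem_range] at hi
    show L1 ((2 * i + 1 : ℕ) : ZMod n) = lam (2 * i + 1)
    simp only [hL1def]
    rw [ZMod.val_cast_of_lt (by omega)]
  have hT2 : (Finset.filter (fun j => Odd (ZMod.val j)) (Finset.univ : Finset (ZMod n))).image L2
      = (Finset.range k).image (fun i => beta (2 * i + 1)) := by
    rw [hOdd, Finset.image_image]
    apply Finset.image_congr
    intro i hi
    rw [Finset.mem_coe, Finset.mem_range] at hi
    show L2 ((2 * i + 1 : ℕ) : ZMod n) = beta (2 * i + 1)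
    simp only [hL2def]
    rw [ZMod.val_cast_of_lt (by omega), hbeta]
    have hoddp : Odd (2 * i + 1) := ⟨i, by omega⟩
    rw [hoddp.neg_one_pow]
    ring
  -- reduce range k to range ((k-1)/2 + 1)
  have hflip : ∀ t : ℕ, 1 ≤ t → t ≤ n → lam (n - t) = lam t := by
    intro t h1 h2
    rw [hlam, hlam]
    congr 1
    refine Finset.sum_congr rfl fun h hh => ?_
    have h3 : ((n - t : ℕ) : ℝ) * h * π / k = (h : ℝ) * (2 * π) - (t : ℝ) * h * π / k := by
      rw [Nat.cast_sub h2, hn]; push_cast; field_simp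
    rw [h3, Real.cos_nat_mul_two_pi_sub]
  have hreduce : ∀ f : ℕ → ℝ, (∀ i, (k - 1) / 2 + 1 ≤ i → i < k → f (k - 1 - i) = f i) →
      (Finset.range k).image f = (Finset.range ((k - 1) / 2 + 1)).image f := by
    intro f hf
    apply Finset.Subset.antisymm
    · intro x hx
      rw [Finset.mem_image] at hx ⊢
      obtain ⟨i, hi, rfl⟩ := hx
      rw [Finset.mem_range] at hi
      by_cases hc : i < (k - 1) / 2 + 1
      · exact ⟨i, Finset.mem_range.mpr hc, rfl⟩
      · exact ⟨k - 1 - i, Finset.mem_range.mpr (by omega), hf i (by omega) hi⟩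
    · apply Finset.image_subset_image
      intro x hx
      rw [Finset.mem_range] at hx ⊢
      omega
  have hflam : ∀ i, (k - 1) / 2 + 1 ≤ i → i < k →
      (fun i => lam (2 * i + 1)) (k - 1 - i) = (fun i => lam (2 * i + 1)) i := by
    intro i h1 h2
    show lam (2 * (k - 1 - i) + 1) = lam (2 * i + 1)
    have h3 : 2 * (k - 1 - i) + 1 = n - (2 * i + 1) := by omega
    rw [h3, hflip (2 * i + 1) (by omega) (by omega)]
  have hfbeta : ∀ i, (k - 1) / 2 + 1 ≤ i → i < k →
      (fun i => beta (2 * i + 1)) (k - 1 - i) = (fun i => beta (2 * i + 1)) i := by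
    intro i h1 h2
    show beta (2 * (k - 1 - i) + 1) = beta (2 * i + 1)
    rw [hbeta, hbeta]
    exact congrArg (fun x : ℝ => -x) (hflam i h1 h2)
  apply hdist
  rw [← hreduce _ hflam, ← hreduce _ hfbeta, ← hT1, ← hT2, himg]
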